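/- Let H be a real inner product space and p ≥ 2. There exists a constant C_p > 0 such that for all x, y ∈ H, ⟨‖x‖^(p−2)·x − ‖y‖^(p−2)·y, x − y⟩ ≥ C_p·‖x − y‖^p. -/

import Mathlib

theorem stmt_7 {H : Type*} [NormedAddCommGroup H] [InnerProductSpace ℝ H]
    (p : ℝ) (hp : 2 ≤ p) :
    ∃ C : ℝ, 0 < C ∧ ∀ x y : H,
      C * ‖x - y‖ ^ p ≤
        inner ℝ (‖x‖ ^ (p - 2) • x - ‖y‖ ^ (p - 2) • y) (x - y) := by
  have hC : (0:ℝ) < 2 ^ (1 - p) := Real.rpow_pos_of_pos two_pos _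
  refine ⟨2 ^ (1 - p), hC, fun x y => ?_⟩
  set a := ‖x‖ with ha
  set b := ‖y‖ with hb
  set d := ‖x - y‖ with hd
  set s := a ^ (p - 2) with hs
  set t := b ^ (p - 2) with ht
  have ha0 : 0 ≤ a := norm_nonneg x
  have hb0 : 0 ≤ b := norm_nonneg y
  have hd0 : 0 ≤ d := norm_nonneg _
  have hs0 : 0 ≤ s := Real.rpow_nonneg ha0 _
  have ht0 : 0 ≤ t := Real.rpow_nonneg hb0 _
  have hxy : (inner ℝ x y : ℝ) = (a ^ 2 + b ^ 2 - d ^ 2) / 2 := by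
    have h1 : d ^ 2 = a ^ 2 - 2 * inner ℝ x y + b ^ 2 := by
      rw [hd, ha, hb]; exact norm_sub_sq_real x y
    linarith
  have hinner : (inner ℝ (s • x - t • y) (x - y) : ℝ)
      = (s + t) * d ^ 2 / 2 + (s - t) * (a ^ 2 - b ^ 2) / 2 := by
    simp only [inner_sub_left, inner_sub_right, real_inner_smul_left]
    have hxy' : (inner ℝ y x : ℝ) = (a ^ 2 + b ^ 2 - d ^ 2) / 2 := by
      rw [real_inner_comm]; exact hxy
    rw [real_inner_self_eq_norm_sq, real_inner_self_eq_norm_sq, ← ha, ← hb, hxy, hxy']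
    ring
  rw [hinner]
  have hsign : 0 ≤ (s - t) * (a ^ 2 - b ^ 2) := by
    rcases le_total a b with h | h
    · have h1 : s ≤ t := Real.rpow_le_rpow ha0 h (by linarith)
      have h2 : a ^ 2 ≤ b ^ 2 := by nlinarith
      nlinarith
    · have h1 : t ≤ s := Real.rpow_le_rpow hb0 h (by linarith)
      have h2 : b ^ 2 ≤ a ^ 2 := by nlinarith
      nlinarith
  have hdab : d ≤ a + b := norm_sub_le x y
  have hkey : d ^ (p - 2) ≤ 2 ^ (p - 2) * (s + t) := by
    rcases le_total a b with h | h
    · calc d ^ (p - 2) ≤ (2 * b) ^ (p - 2) :=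
            Real.rpow_le_rpow hd0 (by linarith) (by linarith)
        _ = 2 ^ (p - 2) * t := by rw [Real.mul_rpow (by norm_num) hb0]
        _ ≤ 2 ^ (p - 2) * (s + t) := by
            have h2 : (0:ℝ) ≤ (2:ℝ) ^ (p - 2) := Real.rpow_nonneg (by norm_num) _
            nlinarith
    · calc d ^ (p - 2) ≤ (2 * a) ^ (p - 2) :=
            Real.rpow_le_rpow hd0 (by linarith) (by linarith)
        _ = 2 ^ (p - 2) * s := by rw [Real.mul_rpow (by norm_num) ha0]
        _ ≤ 2 ^ (p - 2) * (s + t) := by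
            have h2 : (0:ℝ) ≤ (2:ℝ) ^ (p - 2) := Real.rpow_nonneg (by norm_num) _
            nlinarith
  rcases eq_or_lt_of_le hd0 with hdz | hdpos
  · have : d ^ p = 0 := by
      rw [← hdz]; exact Real.zero_rpow (by linarith)
    rw [this]
    nlinarith
  · have hdp : d ^ p = d ^ (p - 2) * d ^ 2 := by
      have h2 : d ^ (2:ℝ) = d ^ (2:ℕ) := Real.rpow_natCast d 2
      rw [← h2, ← Real.rpow_add hdpos]
      norm_num
    have hpow : (2:ℝ) ^ (1 - p) * 2 ^ (p - 2) = 1 / 2 := by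
      rw [← Real.rpow_add two_pos]
      norm_num
    have hd2 : (0:ℝ) ≤ d ^ 2 := sq_nonneg d
    have step : 2 ^ (1 - p) * d ^ p ≤ (s + t) * d ^ 2 / 2 := by
      rw [hdp]
      calc 2 ^ (1 - p) * (d ^ (p - 2) * d ^ 2)
          ≤ 2 ^ (1 - p) * (2 ^ (p - 2) * (s + t) * d ^ 2) := by
            apply mul_le_mul_of_nonneg_left _ (le_of_lt hC)
            exact mul_le_mul_of_nonneg_right hkey hd2
        _ = (2 ^ (1 - p) * 2 ^ (p - 2)) * ((s + t) * d ^ 2) := by ring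
        _ = (s + t) * d ^ 2 / 2 := by rw [hpow]; ring
    linarith
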